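/- Let Σ be an n×n symmetric matrix with unit diagonal and suppose Σ_{j≠i} |Σ_{ij}| ≤ S for every i. Fix α ∈ (2/π, 1]. If S ≤ (1-α)/(α - (4-π)/π), then the matrix M with M_{ii} = 1 - α and M_{ij} = (2/π)arcsin(Σ_{ij}) - α Σ_{ij} for i ≠ j is positive semidefinite. Consequently, for any PSD matrix A, (2/π) Σ_{ij} A_{ij} arcsin(Σ_{ij}) ≥ α Σ_{ij} A_{ij} Σ_{ij}. -/

import Mathlib

open Real Matrix

private lemma key_arcsin_bound {α x : ℝ} (hα1 : 2 / π < α) (hα2 : α ≤ 1)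
    (hx : |x| ≤ 1) : |2 / π * arcsin x - α * x| ≤ (α - (4 - π) / π) * |x| := by
  have hπ : 0 < π := pi_pos
  -- For 0 ≤ y ≤ 1 : y ≤ arcsin y ≤ π/2 * y
  have main : ∀ y : ℝ, 0 ≤ y → y ≤ 1 → y ≤ arcsin y ∧ arcsin y ≤ π / 2 * y := by
    intro y hy0 hy1
    have hs : sin (arcsin y) = y := sin_arcsin (by linarith) hy1
    have ha0 : 0 ≤ arcsin y := arcsin_nonneg.2 hy0
    have ha2 : arcsin y ≤ π / 2 := arcsin_le_pi_div_two y
    have h1 : y ≤ arcsin y := by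
      have := Real.sin_le ha0; linarith [hs]
    have h2 : 2 / π * arcsin y ≤ y := by
      have := Real.mul_le_sin ha0 ha2; rw [hs] at this; linarith
    refine ⟨h1, ?_⟩
    have h3 : π / 2 * (2 / π * arcsin y) ≤ π / 2 * y :=
      mul_le_mul_of_nonneg_left h2 (by positivity)
    have h4 : π / 2 * (2 / π * arcsin y) = arcsin y := by field_simp
    linarith
  have habs : ∀ y : ℝ, 0 ≤ y → y ≤ 1 →
      |2 / π * arcsin y - α * y| ≤ (α - (4 - π) / π) * y := by
    intro y hy0 hy1
    obtain ⟨h1, h2⟩ := main y hy0 hy1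
    have hαπ : 2 < α * π := by
      have := (div_lt_iff₀ hπ).mp hα1; linarith
    rw [abs_le]
    constructor
    · -- α y - (α - (4-π)/π) y ≤ 2/π arcsin y, i.e. ((4-π)/π) y ≤ 2/π arcsin y
      have : (4 - π) / π * y ≤ 2 / π * y := by
        apply mul_le_mul_of_nonneg_right _ hy0
        rw [div_le_div_iff₀ hπ hπ]; nlinarith [pi_gt_three]
      have h1' : 2 / π * y ≤ 2 / π * arcsin y := by
        apply mul_le_mul_of_nonneg_left h1; positivity
      nlinarith
    · -- 2/π arcsin y ≤ α y + (α - (4-π)/π) y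
      have h2' : 2 / π * arcsin y ≤ 2 / π * (π / 2 * y) := by
        apply mul_le_mul_of_nonneg_left h2; positivity
      have hval : 2 / π * (π / 2 * y) = y := by field_simp
      have hc : y ≤ (α + (α - (4 - π) / π)) * y := by
        have : (1 : ℝ) ≤ α + (α - (4 - π) / π) := by
          have h5 : (4 - π) / π < 2 * α - 1 := by
            rw [div_lt_iff₀ hπ]; nlinarith
          linarith
        nlinarith
      nlinarith
  rcases le_or_gt 0 x with h | h
  · have := habs x h (by rwa [abs_of_nonneg h] at hx)
    rwa [abs_of_nonneg h]
  · have hx' : |(-x)| ≤ 1 := by rwa [abs_neg]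
    have := habs (-x) (by linarith) (by rwa [abs_of_nonneg (by linarith : (0:ℝ) ≤ -x)] at hx')
    rw [arcsin_neg] at this
    rw [abs_of_neg h]
    calc |2 / π * arcsin x - α * x| = |-(2 / π * arcsin x - α * x)| := (abs_neg _).symm
      _ = |2 / π * (-arcsin x) - α * (-x)| := by ring_nf
      _ ≤ (α - (4 - π) / π) * (-x) := this

private lemma swap_erase_sum {n : ℕ} (f : Fin n → Fin n → ℝ) :
    ∑ i, ∑ j ∈ Finset.univ.erase i, f i j = ∑ i, ∑ j ∈ Finset.univ.erase i, f j i := by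
  have key : ∀ g : Fin n → Fin n → ℝ, ∑ i, ∑ j ∈ Finset.univ.erase i, g i j
      = ∑ i, ∑ j, if j = i then 0 else g i j := by
    intro g
    refine Finset.sum_congr rfl fun i _ => ?_
    rw [← Finset.sum_erase (Finset.univ : Finset (Fin n)) (f := fun j => if j = i then (0:ℝ) else g i j) (a := i) (by simp)]
    refine Finset.sum_congr rfl fun j hj => ?_
    rw [if_neg (Finset.ne_of_mem_erase hj)]
  rw [key, key, Finset.sum_comm]
  refine Finset.sum_congr rfl fun i _ => Finset.sum_congr rfl fun j _ => ?_
  by_cases h : i = j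
  · simp [h]
  · rw [if_neg h, if_neg (Ne.symm h)]

private lemma gershgorin_psd {n : ℕ} (M : Matrix (Fin n) (Fin n) ℝ)
    (hsym : ∀ i j, M i j = M j i)
    (hdd : ∀ i, ∑ j ∈ Finset.univ.erase i, |M i j| ≤ M i i) :
    M.PosSemidef := by
  rw [Matrix.posSemidef_iff_dotProduct_mulVec]
  constructor
  · ext i j; simp [Matrix.conjTranspose_apply, hsym i j]
  intro x
  have hx : star x = x := by ext i; simp
  rw [hx]
  have hQ : dotProduct x (M.mulVec x) = ∑ i, ∑ j, M i j * x i * x j := by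
    simp only [dotProduct, Matrix.mulVec, Finset.mul_sum]
    exact Finset.sum_congr rfl fun i _ => Finset.sum_congr rfl fun j _ => by ring
  rw [hQ]
  have split : ∀ i, ∑ j, M i j * x i * x j
      = M i i * x i * x i + ∑ j ∈ Finset.univ.erase i, M i j * x i * x j := by
    intro i
    exact (Finset.add_sum_erase _ (fun j => M i j * x i * x j) (Finset.mem_univ i)).symm
  calc (0:ℝ) ≤ ∑ i, ∑ j ∈ Finset.univ.erase i, |M i j| * (|x i| * |x i| - |x i| * |x j|) := by
        have h2 : (2:ℝ) * ∑ i, ∑ j ∈ Finset.univ.erase i, |M i j| * (|x i| * |x i| - |x i| * |x j|)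
            = ∑ i, ∑ j ∈ Finset.univ.erase i, |M i j| * (|x i| - |x j|)^2 := by
          rw [two_mul]
          nth_rewrite 2 [swap_erase_sum (fun i j => |M i j| * (|x i| * |x i| - |x i| * |x j|))]
          rw [← Finset.sum_add_distrib]
          refine Finset.sum_congr rfl fun i _ => ?_
          rw [← Finset.sum_add_distrib]
          refine Finset.sum_congr rfl fun j _ => ?_
          rw [hsym j i]; ring
        have h3 : (0:ℝ) ≤ ∑ i, ∑ j ∈ Finset.univ.erase i, |M i j| * (|x i| - |x j|)^2 := by
          apply Finset.sum_nonneg; intro i _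
          apply Finset.sum_nonneg; intro j _
          positivity
        linarith
    _ ≤ ∑ i, ∑ j, M i j * x i * x j := by
        rw [Finset.sum_congr rfl fun i _ => split i]
        apply Finset.sum_le_sum; intro i _
        have hd : ∑ j ∈ Finset.univ.erase i, |M i j| * (|x i| * |x i|)
            ≤ M i i * x i * x i := by
          rw [← Finset.sum_mul]
          calc (∑ j ∈ Finset.univ.erase i, |M i j|) * (|x i| * |x i|)
              ≤ M i i * (|x i| * |x i|) := by
                apply mul_le_mul_of_nonneg_right (hdd i); positivity
            _ = M i i * x i * x i := by rw [abs_mul_abs_self]; ring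
        have ho : ∑ j ∈ Finset.univ.erase i, (-(|M i j| * (|x i| * |x j|)))
            ≤ ∑ j ∈ Finset.univ.erase i, M i j * x i * x j := by
          apply Finset.sum_le_sum; intro j _
          have : |M i j * x i * x j| = |M i j| * (|x i| * |x j|) := by
            rw [abs_mul, abs_mul]; ring
          have := neg_abs_le (M i j * x i * x j)
          linarith [neg_abs_le (M i j * x i * x j),
            (by rw [abs_mul, abs_mul]; ring :
              |M i j * x i * x j| = |M i j| * (|x i| * |x j|)) ]
        calc ∑ j ∈ Finset.univ.erase i, |M i j| * (|x i| * |x i| - |x i| * |x j|)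
            = ∑ j ∈ Finset.univ.erase i, |M i j| * (|x i| * |x i|)
              + ∑ j ∈ Finset.univ.erase i, (-(|M i j| * (|x i| * |x j|))) := by
              rw [← Finset.sum_add_distrib]
              exact Finset.sum_congr rfl fun j _ => by ring
          _ ≤ M i i * x i * x i + ∑ j ∈ Finset.univ.erase i, M i j * x i * x j :=
              add_le_add hd ho

open scoped MatrixOrder in
private lemma psd_exists_sq {n : ℕ} (A : Matrix (Fin n) (Fin n) ℝ) (hA : A.PosSemidef) :
    ∃ B : Matrix (Fin n) (Fin n) ℝ, A = Bᴴ * B := by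
  obtain ⟨X, hX, -, hXA⟩ :=
    sub_zero A ▸ CFC.exists_sqrt_of_isSelfAdjoint_of_quasispectrumRestricts hA.isHermitian
      (QuasispectrumRestricts.nnreal_of_nonneg hA.nonneg)
  refine ⟨X, ?_⟩
  rw [sub_zero] at hXA
  rw [← hXA]
  have : Xᴴ = X := hX.star_eq
  rw [this]

private lemma psd_frobenius_nonneg {n : ℕ} (A M : Matrix (Fin n) (Fin n) ℝ)
    (hA : A.PosSemidef) (hM : M.PosSemidef) :
    0 ≤ ∑ i, ∑ j, A i j * M i j := by
  obtain ⟨B, hB⟩ := psd_exists_sq A hA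
  obtain ⟨C, hC⟩ := psd_exists_sq M hM
  have htr : ∑ i, ∑ j, A i j * M i j = Matrix.trace (A * Mᵀ) := by
    simp only [Matrix.trace, Matrix.diag, Matrix.mul_apply, Matrix.transpose_apply]
  rw [htr]
  have hMt : Mᵀ = M := (hM.1 : Mᴴ = M)
  rw [hMt, hB, hC]
  have : Bᴴ * B * (Cᴴ * C) = Bᴴ * (B * Cᴴ * C) := by
    simp [Matrix.mul_assoc]
  rw [this, Matrix.trace_mul_comm]
  have heq : B * Cᴴ * C * Bᴴ = (C * Bᴴ)ᴴ * (C * Bᴴ) := by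
    simp [Matrix.conjTranspose_mul, Matrix.mul_assoc]
  rw [heq]
  simp only [Matrix.trace, Matrix.diag, Matrix.mul_apply, Matrix.conjTranspose_apply,
    RCLike.star_def]
  apply Finset.sum_nonneg; intro i _
  apply Finset.sum_nonneg; intro k _
  simp [mul_self_nonneg]

/-- Noisy QUBO Gershgorin lemma: if `Σ` is symmetric with unit diagonal, entries in
`[-1,1]`, and off-diagonal absolute row sums at most `B ≤ (1-α)/(α - (4-π)/π)` for some
`α ∈ (2/π, 1]`, then `M` with `M i i = 1 - α`, `M i j = (2/π) arcsin (S i j) - α S i j`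
is PSD; consequently, for every PSD `A`,
`(2/π) ∑ A i j arcsin (S i j) ≥ α ∑ A i j S i j`. -/
theorem stmt_17 (n : ℕ) (S : Matrix (Fin n) (Fin n) ℝ) (hsym : S.IsHermitian)
    (hdiag : ∀ i, S i i = 1) (hentry : ∀ i j, |S i j| ≤ 1)
    (α : ℝ) (hα1 : 2 / π < α) (hα2 : α ≤ 1)
    (B : ℝ) (hrow : ∀ i, ∑ j ∈ Finset.univ.erase i, |S i j| ≤ B)
    (hB : B ≤ (1 - α) / (α - (4 - π) / π)) :
    (Matrix.of fun i j =>
        if i = j then 1 - α else (2 / π) * arcsin (S i j) - α * S i j).PosSemidef ∧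
      ∀ A : Matrix (Fin n) (Fin n) ℝ, A.PosSemidef →
        α * ∑ i, ∑ j, A i j * S i j ≤ (2 / π) * ∑ i, ∑ j, A i j * arcsin (S i j) := by
  have hπ : 0 < π := pi_pos
  have hcpos' : 0 < α - (4 - π) / π := by
    have h6 : (4 - π) / π < 2 / π := by
      rw [div_lt_div_iff₀ hπ hπ]; nlinarith [pi_gt_three]
    linarith
  set c : ℝ := α - (4 - π) / π with hc
  have hcpos : 0 < c := hcpos'
  set M : Matrix (Fin n) (Fin n) ℝ :=
    Matrix.of fun i j => if i = j then 1 - α else (2 / π) * arcsin (S i j) - α * S i j with hM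
  have hSsym : ∀ i j, S i j = S j i := by
    intro i j
    have := congrFun (congrFun (hsym : Sᴴ = S) i) j
    simpa [Matrix.conjTranspose_apply] using this.symm
  have hMsym : ∀ i j, M i j = M j i := by
    intro i j
    by_cases h : i = j
    · subst h; rfl
    · simp only [hM, Matrix.of_apply, if_neg h, if_neg (Ne.symm h), hSsym i j]
  have hMpsd : M.PosSemidef := by
    apply gershgorin_psd M hMsym
    intro i
    have hbd : ∑ j ∈ Finset.univ.erase i, |M i j| ≤ c * B := by
      calc ∑ j ∈ Finset.univ.erase i, |M i j|
          ≤ ∑ j ∈ Finset.univ.erase i, c * |S i j| := by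
            apply Finset.sum_le_sum; intro j hj
            have hji : j ≠ i := Finset.ne_of_mem_erase hj
            simp only [hM, Matrix.of_apply, if_neg (Ne.symm hji)]
            exact key_arcsin_bound hα1 hα2 (hentry i j)
        _ = c * ∑ j ∈ Finset.univ.erase i, |S i j| := by rw [Finset.mul_sum]
        _ ≤ c * B := mul_le_mul_of_nonneg_left (hrow i) hcpos.le
    have : c * B ≤ 1 - α := by
      have := mul_le_mul_of_nonneg_left hB hcpos.le
      rwa [mul_div_cancel₀ _ (ne_of_gt hcpos)] at this
    have hMii : M i i = 1 - α := by simp [hM]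
    rw [hMii]; linarith
  refine ⟨hMpsd, fun A hA => ?_⟩
  have key := psd_frobenius_nonneg A M hA hMpsd
  have hexp : ∑ i, ∑ j, A i j * M i j
      = (2 / π) * (∑ i, ∑ j, A i j * arcsin (S i j)) - α * (∑ i, ∑ j, A i j * S i j) := by
    rw [Finset.mul_sum, Finset.mul_sum, ← Finset.sum_sub_distrib]
    refine Finset.sum_congr rfl fun i _ => ?_
    rw [Finset.mul_sum, Finset.mul_sum, ← Finset.sum_sub_distrib]
    refine Finset.sum_congr rfl fun j _ => ?_
    by_cases h : i = j
    · subst h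
      simp only [hM, Matrix.of_apply, if_pos rfl, if_true, hdiag i, arcsin_one]
      field_simp
    · simp only [hM, Matrix.of_apply, if_neg h]; ring
  rw [hexp] at key
  linarith
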